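/- Let ρ : ℝ³ → ℝ be a Schwartz function such that 1 + ρ(x) ≥ c for some constant c > 0 and all x ∈ ℝ³, and let b, v, w : ℝ³ → ℝ³ be Schwartz vector fields with div b = 0. Then ∫_{ℝ³} (1/(1+ρ)) (b·∇v)·w dx + ∫_{ℝ³} (1/(1+ρ)) (b·∇w)·v dx = −∫_{ℝ³} div( b/(1+ρ) ) (v·w) dx. (The cancellation identity of Section 2/Lemma 3.3 that compensates for the lack of vertical dissipation in the magnetic-field estimates.) -/

import Mathlib

open MeasureTheory SchwartzMap FourierTransform Real

noncomputable section

/-- Partial derivative of a Schwartz function on `ℝ³` in the `j`-th coordinate direction. -/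
def pd3 (j : Fin 3) (f : SchwartzMap (EuclideanSpace ℝ (Fin 3)) ℝ) :
    SchwartzMap (EuclideanSpace ℝ (Fin 3)) ℝ :=
  LineDeriv.lineDerivOpCLM ℝ (SchwartzMap (EuclideanSpace ℝ (Fin 3)) ℝ) (EuclideanSpace.single j (1 : ℝ)) f

namespace MagneticAux

abbrev E3 : Type := EuclideanSpace ℝ (Fin 3)

lemma pd3_apply (j : Fin 3) (f : 𝓢(E3, ℝ)) (x : E3) :
    pd3 j f x = fderiv ℝ f x (EuclideanSpace.single j 1) :=
  rfl

lemma integral_fderiv_eq_zero (G : E3 → ℝ) (hG : Integrable G) (hd : Differentiable ℝ G)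
    (hG' : Integrable (fderiv ℝ G)) (y : E3) : ∫ x, fderiv ℝ G x y = 0 := by
  set g : E3 → ℂ := fun x => (G x : ℂ) with hg
  have hdg : ∀ x, HasFDerivAt g (Complex.ofRealCLM.comp (fderiv ℝ G x)) x := fun x =>
    Complex.ofRealCLM.hasFDerivAt.comp x (hd x).hasFDerivAt
  have hfg : fderiv ℝ g = fun x => Complex.ofRealCLM.comp (fderiv ℝ G x) := by
    ext1 x; exact (hdg x).fderiv
  have hg_int : Integrable g := hG.ofReal
  have hg_diff : Differentiable ℝ g := fun x => (hdg x).differentiableAt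
  have hg' : Integrable (fderiv ℝ g) := by
    rw [hfg]
    exact ((ContinuousLinearMap.compL ℝ E3 ℝ ℂ Complex.ofRealCLM).integrable_comp hG')
  have key := Real.fourier_fderiv hg_int hg_diff hg'
  have h0 : 𝓕 (fderiv ℝ g) 0 = 0 := by
    rw [key]
    simp only [VectorFourier.fourierSMulRight, map_zero]
    ext w
    simp
  have h1 : (∫ x, fderiv ℝ g x) = 0 := by
    rw [Real.fourier_eq] at h0
    simpa using h0
  have h2 : (∫ x, fderiv ℝ g x y) = 0 := by
    rw [← ContinuousLinearMap.integral_apply hg', h1]; rfl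
  have h3 : ∀ x, fderiv ℝ g x y = (fderiv ℝ G x y : ℂ) := fun x => by rw [hfg]; rfl
  have h4 : ((∫ x, fderiv ℝ G x y : ℝ) : ℂ) = 0 := by
    rw [show ((∫ x, fderiv ℝ G x y : ℝ) : ℂ) = ∫ x, ((fderiv ℝ G x y : ℝ) : ℂ) from
      (integral_ofReal).symm]
    simp_rw [← h3]; exact h2
  exact_mod_cast h4

lemma bdd (f : 𝓢(E3, ℝ)) : ∃ C, ∀ x, |f x| ≤ C :=
  ⟨‖f.toBoundedContinuousFunction‖, fun x => by
    simpa [SchwartzMap.toBoundedContinuousFunction_apply] using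
      BoundedContinuousFunction.norm_coe_le_norm f.toBoundedContinuousFunction x⟩

lemma bdd_mul {h g : E3 → ℝ} (hh : ∃ C, ∀ x, |h x| ≤ C) (hg : ∃ C, ∀ x, |g x| ≤ C) :
    ∃ C, ∀ x, |h x * g x| ≤ C := by
  obtain ⟨C, hC⟩ := hh; obtain ⟨D, hD⟩ := hg
  exact ⟨C * D, fun x => by
    rw [abs_mul]
    exact mul_le_mul (hC x) (hD x) (abs_nonneg _) ((abs_nonneg _).trans (hC x))⟩

lemma bdd_neg {h : E3 → ℝ} (hh : ∃ C, ∀ x, |h x| ≤ C) : ∃ C, ∀ x, |-(h x)| ≤ C := by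
  obtain ⟨C, hC⟩ := hh
  exact ⟨C, fun x => by rw [abs_neg]; exact hC x⟩

lemma bdd_sub {h g : E3 → ℝ} (hh : ∃ C, ∀ x, |h x| ≤ C) (hg : ∃ C, ∀ x, |g x| ≤ C) :
    ∃ C, ∀ x, |h x - g x| ≤ C := by
  obtain ⟨C, hC⟩ := hh; obtain ⟨D, hD⟩ := hg
  exact ⟨C + D, fun x => by
    rw [sub_eq_add_neg]
    exact (abs_add_le _ _).trans (add_le_add (hC x) (by rw [abs_neg]; exact hD x))⟩

lemma bdd_sum {ι : Type*} [Fintype ι] (f : ι → E3 → ℝ) (h : ∀ i, ∃ C, ∀ x, |f i x| ≤ C) :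
    ∃ C, ∀ x, |∑ i, f i x| ≤ C := by
  choose C hC using h
  exact ⟨∑ i, C i, fun x =>
    (Finset.abs_sum_le_sum_abs _ _).trans (Finset.sum_le_sum fun i _ => hC i x)⟩

lemma int_smul {Fn : Type*} [NormedAddCommGroup Fn] [NormedSpace ℝ Fn] {h : E3 → ℝ}
    (hc : Continuous h) (hb : ∃ C, ∀ x, |h x| ≤ C) (f : 𝓢(E3, Fn)) :
    Integrable (fun x => h x • f x) := by
  obtain ⟨C, hC⟩ := hb
  refine (f.integrable.norm.const_mul C).mono'
    ((hc.smul f.continuous).aestronglyMeasurable) ?_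
  filter_upwards with x
  rw [norm_smul, Real.norm_eq_abs]
  exact mul_le_mul_of_nonneg_right (hC x) (norm_nonneg _)

lemma int_mul {h : E3 → ℝ} (hc : Continuous h) (hb : ∃ C, ∀ x, |h x| ≤ C)
    (f : 𝓢(E3, ℝ)) : Integrable (fun x => h x * f x) := by
  simpa [smul_eq_mul] using int_smul hc hb f

end MagneticAux

open MagneticAux in
set_option maxHeartbeats 2000000 in
/-- Cancellation identity compensating for the lack of vertical dissipation: for Schwartz
vector fields `b, v, w` (given componentwise) with `div b = 0` and a Schwartz `ρ` with
`1 + ρ ≥ c > 0`,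
`∫ (1/(1+ρ)) (b·∇v)·w + ∫ (1/(1+ρ)) (b·∇w)·v = -∫ div(b/(1+ρ)) (v·w)`. -/
theorem magnetic_cancellation
    (ρ : SchwartzMap (EuclideanSpace ℝ (Fin 3)) ℝ) (c : ℝ) (hc : 0 < c)
    (hρ : ∀ x, c ≤ 1 + ρ x)
    (b v w : Fin 3 → SchwartzMap (EuclideanSpace ℝ (Fin 3)) ℝ)
    (hdiv : ∀ x, ∑ j, pd3 j (b j) x = 0) :
    (∫ x, (1/(1 + ρ x)) * ∑ i, (∑ j, b j x * pd3 j (v i) x) * w i x) +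
      (∫ x, (1/(1 + ρ x)) * ∑ i, (∑ j, b j x * pd3 j (w i) x) * v i x) =
      -∫ x, (∑ j : Fin 3, fderiv ℝ (fun y => b j y / (1 + ρ y)) x (EuclideanSpace.single j 1)) *
        (∑ i, v i x * w i x) := by
  classical
  set A : E3 → ℝ := fun x => (1/(1 + ρ x)) * ∑ i, (∑ j, b j x * pd3 j (v i) x) * w i x with hA_def
  set B : E3 → ℝ := fun x => (1/(1 + ρ x)) * ∑ i, (∑ j, b j x * pd3 j (w i) x) * v i x with hB_def
  set D : E3 → ℝ := fun x =>
    (∑ j : Fin 3, fderiv ℝ (fun y => b j y / (1 + ρ y)) x (EuclideanSpace.single j 1)) *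
      (∑ i, v i x * w i x) with hD_def
  have hpos : ∀ x : E3, 0 < 1 + ρ x := fun x => lt_of_lt_of_le hc (hρ x)
  have hne : ∀ x : E3, (1 + ρ x) ≠ 0 := fun x => ne_of_gt (hpos x)
  set u : E3 → ℝ := fun x => (1 + ρ x)⁻¹ with hu_def
  have hu_bdd : ∀ x, |u x| ≤ c⁻¹ := fun x => by
    rw [hu_def, abs_of_pos (inv_pos.2 (hpos x))]
    gcongr
    exact hρ x
  have hbu : ∃ C, ∀ x, |u x| ≤ C := ⟨c⁻¹, hu_bdd⟩
  have hbu2 : ∃ C, ∀ x, |u x ^ 2| ≤ C := by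
    obtain ⟨C, hC⟩ := bdd_mul hbu hbu
    exact ⟨C, fun x => by rw [pow_two]; simpa using hC x⟩
  have hu_cont : Continuous u := (continuous_const.add ρ.continuous).inv₀ hne
  have hρd : ∀ x : E3, HasFDerivAt (fun y => 1 + ρ y) (fderiv ℝ ρ x) x := fun x => by
    exact ((ρ.differentiable x).hasFDerivAt.const_add 1)
  have hud : ∀ x, HasFDerivAt u ((-((1 + ρ x) ^ 2)⁻¹) • fderiv ℝ ρ x) x := fun x =>
    (hasDerivAt_inv (hne x)).comp_hasFDerivAt x (hρd x)
  -- derivative of b j / (1 + ρ), applied to e j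
  have hqd : ∀ (j : Fin 3) (x : E3), HasFDerivAt (fun y => b j y / (1 + ρ y))
      (b j x • ((-((1 + ρ x) ^ 2)⁻¹) • fderiv ℝ ρ x) + u x • fderiv ℝ (b j) x) x := by
    intro j x
    simp only [div_eq_mul_inv]
    exact ((b j).differentiable x).hasFDerivAt.mul (hud x)
  have hq_app : ∀ (j : Fin 3) (x : E3),
      fderiv ℝ (fun y => b j y / (1 + ρ y)) x (EuclideanSpace.single j 1)
        = u x * pd3 j (b j) x - u x ^ 2 * (b j x * pd3 j ρ x) := by
    intro j x
    rw [(hqd j x).fderiv]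
    simp only [ContinuousLinearMap.add_apply, ContinuousLinearMap.smul_apply, smul_eq_mul,
      ← pd3_apply, hu_def, inv_pow]
    ring
  -- derivative of F = ∑ v i * w i
  have hFd : ∀ x : E3, HasFDerivAt (fun y => ∑ i, v i y * w i y)
      (∑ i, (v i x • fderiv ℝ (w i) x + w i x • fderiv ℝ (v i) x)) x := fun x =>
    HasFDerivAt.fun_sum fun i _ =>
      ((v i).differentiable x).hasFDerivAt.mul ((w i).differentiable x).hasFDerivAt
  set G : Fin 3 → E3 → ℝ := fun j y => (b j y * ∑ i, v i y * w i y) * u y with hG_def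
  have hPd : ∀ (j : Fin 3) (x : E3), HasFDerivAt (fun y => b j y * ∑ i, v i y * w i y)
      (b j x • (∑ i, (v i x • fderiv ℝ (w i) x + w i x • fderiv ℝ (v i) x))
        + (∑ i, v i x * w i x) • fderiv ℝ (b j) x) x := fun j x =>
    ((b j).differentiable x).hasFDerivAt.mul (hFd x)
  have hGd : ∀ (j : Fin 3) (x : E3), HasFDerivAt (G j)
      ((b j x * ∑ i, v i x * w i x) • ((-((1 + ρ x) ^ 2)⁻¹) • fderiv ℝ ρ x)
        + u x • (b j x • (∑ i, (v i x • fderiv ℝ (w i) x + w i x • fderiv ℝ (v i) x))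
          + (∑ i, v i x * w i x) • fderiv ℝ (b j) x)) x := fun j x =>
    (hPd j x).mul (hud x)
  have hG_app : ∀ (j : Fin 3) (x : E3), fderiv ℝ (G j) x (EuclideanSpace.single j 1) =
      u x * (pd3 j (b j) x * ∑ i, v i x * w i x)
        + u x * (b j x * ∑ i, (v i x * pd3 j (w i) x + w i x * pd3 j (v i) x))
        - u x ^ 2 * ((b j x * pd3 j ρ x) * ∑ i, v i x * w i x) := by
    intro j x
    rw [(hGd j x).fderiv]
    simp only [ContinuousLinearMap.add_apply, ContinuousLinearMap.smul_apply,
      ContinuousLinearMap.coe_sum', Finset.sum_apply, smul_eq_mul, ← pd3_apply, hu_def,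
      inv_pow]
    ring

  have hFcont : Continuous fun x : E3 => ∑ i, v i x * w i x :=
    continuous_finset_sum _ fun i _ => ((v i).continuous.mul (w i).continuous)
  have hbF : ∃ C, ∀ x, |∑ i, v i x * w i x| ≤ C :=
    bdd_sum _ fun i => bdd_mul (bdd (v i)) (bdd (w i))
  have hG'eq : ∀ j : Fin 3, fderiv ℝ (G j) = fun x =>
      (-(b j x * (∑ i, v i x * w i x) * (u x * u x))) • (SchwartzMap.fderivCLM ℝ E3 ℝ ρ) x
        + (u x * ∑ i, v i x * w i x) • (SchwartzMap.fderivCLM ℝ E3 ℝ (b j)) x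
        + ∑ i, ((u x * (b j x * v i x)) • (SchwartzMap.fderivCLM ℝ E3 ℝ (w i)) x
            + (u x * (b j x * w i x)) • (SchwartzMap.fderivCLM ℝ E3 ℝ (v i)) x) := by
    intro j; funext x
    rw [(hGd j x).fderiv]
    have hsum : (∑ i, ((u x * (b j x * v i x)) • (SchwartzMap.fderivCLM ℝ E3 ℝ (w i)) x
            + (u x * (b j x * w i x)) • (SchwartzMap.fderivCLM ℝ E3 ℝ (v i)) x))
        = (u x * b j x) • ∑ i, (v i x • fderiv ℝ (w i) x + w i x • fderiv ℝ (v i) x) := by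
      rw [Finset.smul_sum]
      refine Finset.sum_congr rfl fun i _ => ?_
      simp only [SchwartzMap.fderivCLM_apply, smul_add, smul_smul, mul_assoc]
    rw [smul_smul, smul_add, smul_smul, smul_smul, hsum]
    rw [show ((b j x * ∑ i, v i x * w i x) * -((1 + ρ x) ^ 2)⁻¹)
        = -(b j x * (∑ i, v i x * w i x) * (u x * u x)) from by
      rw [show ((1 + ρ x) ^ 2)⁻¹ = u x * u x from by
        simp only [hu_def]; rw [← mul_inv, ← sq]]
      ring]
    simp only [SchwartzMap.fderivCLM_apply]
    abel
  have hIG' : ∀ j : Fin 3, Integrable (fderiv ℝ (G j)) := by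
    intro j
    rw [hG'eq j]
    exact ((int_smul ((((b j).continuous.mul hFcont).mul (hu_cont.mul hu_cont)).neg)
        (bdd_neg (bdd_mul (bdd_mul (bdd (b j)) hbF) (bdd_mul hbu hbu))) _).add
      (int_smul (hu_cont.mul hFcont) (bdd_mul hbu hbF) _)).add
      (integrable_finset_sum (f := fun i x => (u x * (b j x * v i x)) • (SchwartzMap.fderivCLM ℝ E3 ℝ (w i)) x
            + (u x * (b j x * w i x)) • (SchwartzMap.fderivCLM ℝ E3 ℝ (v i)) x) _ fun i _ =>
        (int_smul (hu_cont.mul ((b j).continuous.mul (v i).continuous))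
          (bdd_mul hbu (bdd_mul (bdd (b j)) (bdd (v i)))) (SchwartzMap.fderivCLM ℝ E3 ℝ (w i))).fun_add
        (int_smul (hu_cont.mul ((b j).continuous.mul (w i).continuous))
          (bdd_mul hbu (bdd_mul (bdd (b j)) (bdd (w i)))) (SchwartzMap.fderivCLM ℝ E3 ℝ (v i))))
  have hIG : ∀ j : Fin 3, Integrable (G j) := by
    intro j
    have hGr : G j = fun x => ∑ i, (u x * (b j x * v i x)) * w i x := by
      funext x
      simp only [hG_def]
      rw [Finset.mul_sum, Finset.sum_mul]
      exact Finset.sum_congr rfl fun i _ => by ring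
    rw [hGr]
    exact integrable_finset_sum _ fun i _ =>
      int_mul (hu_cont.mul ((b j).continuous.mul (v i).continuous))
        (bdd_mul hbu (bdd_mul (bdd (b j)) (bdd (v i)))) (w i)
  have hdiffG : ∀ j : Fin 3, Differentiable ℝ (G j) := fun j x => (hGd j x).differentiableAt
  have hIA : Integrable A := by
    have hA_eq : A = fun x => ∑ i, (u x * ∑ j, b j x * pd3 j (v i) x) * w i x := by
      funext x
      simp only [hA_def]
      rw [Finset.mul_sum]
      refine Finset.sum_congr rfl fun i _ => ?_
      simp only [hu_def, one_div]; ring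
    rw [hA_eq]
    exact integrable_finset_sum _ fun i _ =>
      int_mul (hu_cont.mul (continuous_finset_sum _ fun j _ =>
          ((b j).continuous.mul (pd3 j (v i)).continuous)))
        (bdd_mul hbu (bdd_sum _ fun j => bdd_mul (bdd (b j)) (bdd (pd3 j (v i))))) (w i)
  have hIB : Integrable B := by
    have hB_eq : B = fun x => ∑ i, (u x * ∑ j, b j x * pd3 j (w i) x) * v i x := by
      funext x
      simp only [hB_def]
      rw [Finset.mul_sum]
      refine Finset.sum_congr rfl fun i _ => ?_
      simp only [hu_def, one_div]; ring
    rw [hB_eq]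
    exact integrable_finset_sum _ fun i _ =>
      int_mul (hu_cont.mul (continuous_finset_sum _ fun j _ =>
          ((b j).continuous.mul (pd3 j (w i)).continuous)))
        (bdd_mul hbu (bdd_sum _ fun j => bdd_mul (bdd (b j)) (bdd (pd3 j (w i))))) (v i)
  have hID : Integrable D := by
    have hD_eq : D = fun x => ∑ i,
        ((∑ j, (u x * pd3 j (b j) x - u x ^ 2 * (b j x * pd3 j ρ x))) * v i x) * w i x := by
      funext x
      simp only [hD_def, hq_app]
      rw [Finset.mul_sum]
      exact Finset.sum_congr rfl fun i _ => by ring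
    rw [hD_eq]
    exact integrable_finset_sum _ fun i _ =>
      int_mul ((continuous_finset_sum _ fun j _ =>
          ((hu_cont.mul (pd3 j (b j)).continuous).sub
            ((hu_cont.pow 2).mul ((b j).continuous.mul (pd3 j ρ).continuous)))).mul
          (v i).continuous)
        (bdd_mul (bdd_sum _ fun j => bdd_sub (bdd_mul hbu (bdd (pd3 j (b j))))
          (bdd_mul hbu2 (bdd_mul (bdd (b j)) (bdd (pd3 j ρ))))) (bdd (v i))) (w i)
  have happly_int : ∀ j : Fin 3,
      Integrable fun x => fderiv ℝ (G j) x (EuclideanSpace.single j 1) := fun j =>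
    (hIG' j).apply_continuousLinearMap _
  have hzero : ∀ j : Fin 3, ∫ x, fderiv ℝ (G j) x (EuclideanSpace.single j 1) = 0 := fun j =>
    integral_fderiv_eq_zero (G j) (hIG j) (hdiffG j) (hIG' j) _
  have hpt : ∀ x, A x + B x + D x = ∑ j, fderiv ℝ (G j) x (EuclideanSpace.single j 1) := by
    intro x
    have e1 : A x = ∑ j, ∑ i, u x * (b j x * pd3 j (v i) x * w i x) :=
      calc A x = ∑ i, ∑ j, u x * (b j x * pd3 j (v i) x * w i x) := by
            simp only [hA_def]
            rw [Finset.mul_sum]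
            refine Finset.sum_congr rfl fun i _ => ?_
            rw [Finset.sum_mul, Finset.mul_sum]
            refine Finset.sum_congr rfl fun j _ => ?_
            simp only [hu_def, one_div]
        _ = ∑ j, ∑ i, u x * (b j x * pd3 j (v i) x * w i x) := Finset.sum_comm
    have e2 : B x = ∑ j, ∑ i, u x * (b j x * pd3 j (w i) x * v i x) :=
      calc B x = ∑ i, ∑ j, u x * (b j x * pd3 j (w i) x * v i x) := by
            simp only [hB_def]
            rw [Finset.mul_sum]
            refine Finset.sum_congr rfl fun i _ => ?_
            rw [Finset.sum_mul, Finset.mul_sum]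
            refine Finset.sum_congr rfl fun j _ => ?_
            simp only [hu_def, one_div]
        _ = ∑ j, ∑ i, u x * (b j x * pd3 j (w i) x * v i x) := Finset.sum_comm
    have e3 : D x = ∑ j, ∑ i,
        (u x * pd3 j (b j) x - u x ^ 2 * (b j x * pd3 j ρ x)) * (v i x * w i x) := by
      simp only [hD_def, hq_app]
      rw [Finset.sum_mul]
      exact Finset.sum_congr rfl fun j _ => by rw [Finset.mul_sum]
    rw [e1, e2, e3, ← Finset.sum_add_distrib, ← Finset.sum_add_distrib]
    refine Finset.sum_congr rfl fun j _ => ?_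
    rw [hG_app j x]
    simp only [Finset.mul_sum]
    rw [← Finset.sum_add_distrib, ← Finset.sum_add_distrib, ← Finset.sum_add_distrib,
      ← Finset.sum_sub_distrib]
    exact Finset.sum_congr rfl fun i _ => by ring
  rw [eq_neg_iff_add_eq_zero]
  have hIAB : Integrable (fun x => A x + B x) := hIA.add hIB
  rw [← integral_add hIA hIB, ← integral_add hIAB hID]
  rw [integral_congr_ae (Filter.Eventually.of_forall hpt)]
  rw [integral_finset_sum _ fun j _ => happly_int j]
  exact Finset.sum_eq_zero fun j _ => hzero j


end
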